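/- Consider the vector field F : ℝ³ → ℝ³ given by F(x,y,z) = (−x + z(x+yz)², −y − (x+yz)², −z). The curve γ(t) = (18e^t, −12e^{2t}, e^{−t}) satisfies γ'(t) = F(γ(t)) for all t ∈ ℝ, and ‖γ(t)‖ → ∞ as t → ∞; in particular, the system ẋ = F(x) admits a solution that does not tend to the equilibrium point 0. -/

import Mathlib

noncomputable def F14 : ℝ × ℝ × ℝ → ℝ × ℝ × ℝ := fun p =>
  (-p.1 + p.2.2 * (p.1 + p.2.1 * p.2.2) ^ 2,
    -p.2.1 - (p.1 + p.2.1 * p.2.2) ^ 2,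
    -p.2.2)

noncomputable def γ14 : ℝ → ℝ × ℝ × ℝ := fun t =>
  (18 * Real.exp t, -12 * Real.exp (2 * t), Real.exp (-t))

theorem stmt14 :
    (∀ t : ℝ, HasDerivAt γ14 (F14 (γ14 t)) t) ∧
      Filter.Tendsto (fun t => ‖γ14 t‖) Filter.atTop Filter.atTop ∧
      ¬ Filter.Tendsto γ14 Filter.atTop (nhds 0) := by
  have hderiv : ∀ t : ℝ, HasDerivAt γ14 (F14 (γ14 t)) t := by
    intro t
    have h1 : HasDerivAt (fun t : ℝ => 18 * Real.exp t) (18 * Real.exp t) t :=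
      (Real.hasDerivAt_exp t).const_mul 18
    have h2 : HasDerivAt (fun t : ℝ => -12 * Real.exp (2 * t)) (-24 * Real.exp (2 * t)) t := by
      have := ((hasDerivAt_id t).const_mul (2:ℝ)).exp.const_mul (-12 : ℝ)
      convert this using 1
      · rfl
      · rfl
      · simp
      · simp; ring
    have h3 : HasDerivAt (fun t : ℝ => Real.exp (-t)) (-Real.exp (-t)) t := by
      have := ((hasDerivAt_id t).neg).exp
      simpa using this
    have h := h1.prodMk (h2.prodMk h3)
    convert h using 1
    · rfl
    simp only [F14, γ14]
    have e1 : Real.exp (2 * t) * Real.exp (-t) = Real.exp t := by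
      rw [← Real.exp_add]; ring_nf
    have e2 : Real.exp t * Real.exp t = Real.exp (2 * t) := by
      rw [← Real.exp_add]; ring_nf
    refine Prod.ext ?_ (Prod.ext ?_ rfl)
    · show -(18 * Real.exp t) + Real.exp (-t) *
        (18 * Real.exp t + -12 * Real.exp (2 * t) * Real.exp (-t)) ^ 2 = 18 * Real.exp t
      rw [show 18 * Real.exp t + -12 * Real.exp (2 * t) * Real.exp (-t) = 6 * Real.exp t by
        rw [mul_assoc, e1]; ring]
      have hm : Real.exp (-t) * Real.exp t = 1 := by rw [← Real.exp_add]; simp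
      have : Real.exp (-t) * (6 * Real.exp t) ^ 2 = 36 * Real.exp t := by
        have := hm; nlinarith [Real.exp_pos t, hm]
      rw [this]; ring
    · show -(-12 * Real.exp (2 * t)) -
        (18 * Real.exp t + -12 * Real.exp (2 * t) * Real.exp (-t)) ^ 2 = -24 * Real.exp (2 * t)
      rw [show 18 * Real.exp t + -12 * Real.exp (2 * t) * Real.exp (-t) = 6 * Real.exp t by
        rw [mul_assoc, e1]; ring]
      nlinarith [e2]
  refine ⟨hderiv, ?_, ?_⟩
  · have hnorm : Filter.Tendsto (fun t => ‖γ14 t‖) Filter.atTop Filter.atTop := by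
      have hx : Filter.Tendsto (fun t => 18 * Real.exp t) Filter.atTop Filter.atTop :=
        Real.tendsto_exp_atTop.const_mul_atTop (by norm_num)
      apply Filter.tendsto_atTop_mono _ hx
      intro t
      calc 18 * Real.exp t = |18 * Real.exp t| := by
            rw [abs_of_pos]; positivity
        _ = ‖(γ14 t).1‖ := rfl
        _ ≤ ‖γ14 t‖ := norm_fst_le _
    exact hnorm
  · intro h
    have hx : Filter.Tendsto (fun t => ‖γ14 t‖) Filter.atTop Filter.atTop := by
      have hx : Filter.Tendsto (fun t => 18 * Real.exp t) Filter.atTop Filter.atTop :=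
        Real.tendsto_exp_atTop.const_mul_atTop (by norm_num)
      apply Filter.tendsto_atTop_mono _ hx
      intro t
      calc 18 * Real.exp t = |18 * Real.exp t| := by
            rw [abs_of_pos]; positivity
        _ = ‖(γ14 t).1‖ := rfl
        _ ≤ ‖γ14 t‖ := norm_fst_le _
    have h0 : Filter.Tendsto (fun t => ‖γ14 t‖) Filter.atTop (nhds ‖(0 : ℝ × ℝ × ℝ)‖) :=
      h.norm
    have := hx.eventually_gt_atTop ‖(0 : ℝ × ℝ × ℝ)‖
    have hb : ¬ Filter.Tendsto (fun t => ‖γ14 t‖) Filter.atTop (nhds ‖(0 : ℝ × ℝ × ℝ)‖) := by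
      intro hc
      exact not_tendsto_atTop_of_tendsto_nhds hc hx
    exact hb h0
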